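/- Let $A, B \in \mathbb{C}$ with $A \neq 0$ and $|B/A| \leq 1$, let $0 < \beta < 1$, let $z \in \mathbb{C}$ with $|z| \geq 1$, and let $w_0 \geq 1$ be an integer. Define $y = -\frac{B}{A}\cdot\frac{1 + \beta z^{w_0}}{\beta + z^{w_0}}$. If $|y| \geq 1$, then $|z| = 1$ and $|B/A| = 1$. -/

import Mathlib

set_option maxHeartbeats 1000000 in
theorem stmt_5 (A B : ℂ) (hA : A ≠ 0) (hBA : ‖B / A‖ ≤ 1) (β : ℝ)
    (hβ0 : 0 < β) (hβ1 : β < 1) (z : ℂ) (hz : 1 ≤ ‖z‖) (w₀ : ℕ) (hw₀ : 1 ≤ w₀)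
    (y : ℂ) (hy : y = -(B / A) * ((1 + (β : ℂ) * z ^ w₀) / ((β : ℂ) + z ^ w₀)))
    (hy1 : 1 ≤ ‖y‖) :
    ‖z‖ = 1 ∧ ‖B / A‖ = 1 := by
  set u : ℂ := z ^ w₀ with hu
  clear_value u
  have hun : 1 ≤ ‖u‖ := by
    rw [hu, norm_pow]
    exact one_le_pow₀ hz
  have key : ‖(β:ℂ) + u‖ ^ 2 - ‖1 + (β:ℂ) * u‖ ^ 2 = (1 - β ^ 2) * (‖u‖ ^ 2 - 1) := by
    simp only [Complex.sq_norm, Complex.normSq_apply,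
      Complex.add_re, Complex.add_im, Complex.mul_re, Complex.mul_im,
      Complex.ofReal_re, Complex.ofReal_im, Complex.one_re, Complex.one_im]
    ring
  have hβ2 : β ^ 2 < 1 := by nlinarith
  have hu2 : 0 ≤ ‖u‖ ^ 2 - 1 := by nlinarith
  have hkey0 : 0 ≤ (1 - β ^ 2) * (‖u‖ ^ 2 - 1) := mul_nonneg (by nlinarith) hu2
  have hden : ((β:ℂ) + u) ≠ 0 := by
    intro h
    have : u = -(β:ℂ) := by linear_combination h
    rw [this] at hun
    simp at hun
    rw [abs_of_pos hβ0] at hun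
    linarith
  have hdenpos : 0 < ‖(β:ℂ) + u‖ := norm_pos_iff.mpr hden
  have hnum : ‖1 + (β:ℂ) * u‖ ≤ ‖(β:ℂ) + u‖ := by nlinarith [norm_nonneg (1 + (β:ℂ)*u), norm_nonneg ((β:ℂ)+u)]
  have hfrac : ‖1 + (β:ℂ) * u‖ / ‖(β:ℂ) + u‖ ≤ 1 := (div_le_one hdenpos).mpr hnum
  have hyn : ‖y‖ = ‖B / A‖ * (‖1 + (β:ℂ) * u‖ / ‖(β:ℂ) + u‖) := by
    rw [hy]; simp [norm_div]
  have hBA0 : 0 ≤ ‖B / A‖ := norm_nonneg _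
  have hfrac0 : 0 ≤ ‖1 + (β:ℂ) * u‖ / ‖(β:ℂ) + u‖ := by positivity
  have h1 : ‖B / A‖ = 1 := by nlinarith [hy1, hyn]
  have h2 : ‖1 + (β:ℂ) * u‖ = ‖(β:ℂ) + u‖ := by
    have : ‖1 + (β:ℂ) * u‖ / ‖(β:ℂ) + u‖ = 1 := by nlinarith [hy1, hyn]
    rw [div_eq_one_iff_eq hdenpos.ne'] at this
    exact this
  have hzero : (1 - β ^ 2) * (‖u‖ ^ 2 - 1) = 0 := by rw [← key, h2]; ring
  have hsq : ‖u‖ ^ 2 = 1 := by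
    rcases mul_eq_zero.mp hzero with h | h
    · nlinarith
    · linarith
  have hu1 : ‖u‖ = 1 := by nlinarith [norm_nonneg u, sq_nonneg (‖u‖ - 1)]
  have hz1 : ‖z‖ = 1 := by
    by_contra h
    have hz' : 1 < ‖z‖ := lt_of_le_of_ne hz (Ne.symm h)
    have : 1 < ‖u‖ := by
      rw [hu, norm_pow]
      exact one_lt_pow₀ hz' (by omega)
    linarith
  exact ⟨hz1, h1⟩
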